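/- For a nonempty subset S of a real projective space P(V): (i) if S is projective convex then Φ(S) ⊆ P(V*) is projective convex; (ii) if S is open projective convex then Φ(S) is closed projective convex; (iii) if S is closed projective convex then Φ(S) is open projective convex. -/

import Mathlib

open scoped LinearAlgebra.Projectivization
open Projectivization

/-- The "positive" projective segment joining the points represented by `u` and `v`:
`{π(a•u + b•v) : a*b ≥ 0, (a,b) ≠ (0,0)}`. -/
def projSeg {W : Type*} [AddCommGroup W] [Module ℝ W] (u v : W) : Set (ℙ ℝ W) :=
  {x | ∃ (a b : ℝ) (h : a • u + b • v ≠ 0),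
    0 ≤ a * b ∧ x = Projectivization.mk ℝ (a • u + b • v) h}

/-- The "negative" projective segment joining the points represented by `u` and `v`:
`{π(a•u + b•v) : a*b ≤ 0, (a,b) ≠ (0,0)}`. -/
def projSegN {W : Type*} [AddCommGroup W] [Module ℝ W] (u v : W) : Set (ℙ ℝ W) :=
  {x | ∃ (a b : ℝ) (h : a • u + b • v ≠ 0),
    a * b ≤ 0 ∧ x = Projectivization.mk ℝ (a • u + b • v) h}

/-- A set in a real projective space is projective convex if for any two distinct points of it,
exactly one of the two projective segments joining them is contained in it. -/
def IsProjConvex {W : Type*} [AddCommGroup W] [Module ℝ W] (S : Set (ℙ ℝ W)) : Prop :=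
  ∀ p ∈ S, ∀ q ∈ S, p ≠ q →
    Xor' (projSeg p.rep q.rep ⊆ S) (projSegN p.rep q.rep ⊆ S)

/-- The quotient topology on a real projective space. -/
noncomputable instance projTopInst {W : Type*} [NormedAddCommGroup W] [NormedSpace ℝ W] :
    TopologicalSpace (ℙ ℝ W) :=
  instTopologicalSpaceQuotient

noncomputable instance dualNACG {W : Type*} [NormedAddCommGroup W] [NormedSpace ℝ W]
    [FiniteDimensional ℝ W] : NormedAddCommGroup (Module.Dual ℝ W) :=
  NormedAddCommGroup.induced _ _
    (LinearMap.toContinuousLinearMap : Module.Dual ℝ W ≃ₗ[ℝ] (W →L[ℝ] ℝ))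
    (LinearEquiv.injective _)

noncomputable instance dualNS {W : Type*} [NormedAddCommGroup W] [NormedSpace ℝ W]
    [FiniteDimensional ℝ W] : NormedSpace ℝ (Module.Dual ℝ W) :=
  NormedSpace.induced ℝ _ _
    (LinearMap.toContinuousLinearMap : Module.Dual ℝ W ≃ₗ[ℝ] (W →L[ℝ] ℝ))

/-- `Φ(S)`: the hyperplanes disjoint from `S`, viewed as points of the dual projective space. -/
def PhiMap {W : Type*} [AddCommGroup W] [Module ℝ W] (S : Set (ℙ ℝ W)) :
    Set (ℙ ℝ (Module.Dual ℝ W)) :=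
  {ψ | ∀ x ∈ S, ψ.rep x.rep ≠ 0}

/-! ### Auxiliary lemmas -/

section Aux

variable {W : Type*} [AddCommGroup W] [Module ℝ W]

lemma exists_rep_smul (w : W) (h : w ≠ 0) :
    ∃ c : ℝ, c ≠ 0 ∧ (Projectivization.mk ℝ w h).rep = c • w := by
  obtain ⟨a, ha⟩ := exists_smul_eq_mk_rep ℝ w h
  exact ⟨(a : ℝ), a.ne_zero, by rw [← ha, Units.smul_def]⟩

lemma ne_imp_indep {p q : ℙ ℝ W} (hpq : p ≠ q) :
    ∀ a b : ℝ, a • p.rep + b • q.rep = 0 → a = 0 ∧ b = 0 := by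
  intro a b hab
  rcases eq_or_ne a 0 with ha | ha
  · subst ha
    rw [zero_smul, zero_add] at hab
    rcases smul_eq_zero.1 hab with hb | hv
    · exact ⟨rfl, hb⟩
    · exact absurd hv q.rep_nonzero
  · exfalso
    have h1 : a • p.rep = (-b) • q.rep := by
      rw [neg_smul]; exact eq_neg_of_add_eq_zero_left hab
    have h2 : p.rep = (a⁻¹ * (-b)) • q.rep := by
      have := congrArg (a⁻¹ • ·) h1
      simpa [smul_smul, inv_mul_cancel₀ ha] using this
    apply hpq
    rw [← p.mk_rep, ← q.mk_rep]
    exact (mk_eq_mk_iff' ℝ _ _ p.rep_nonzero q.rep_nonzero).2 ⟨a⁻¹ * (-b), h2.symm⟩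

/-- Evaluation at the canonical rep vanishes iff it vanishes at any representative. -/
lemma apply_rep_eq_zero_iff (φ : Module.Dual ℝ W) (w : W) (h : w ≠ 0) :
    φ (Projectivization.mk ℝ w h).rep = 0 ↔ φ w = 0 := by
  obtain ⟨c, hc, hrep⟩ := exists_rep_smul w h
  rw [hrep, map_smul, smul_eq_mul, mul_eq_zero]
  simp [hc]

/-- The rep of a point of the dual projectivization vanishes iff the representative does. -/
lemma rep_apply_eq_zero_iff (φ : Module.Dual ℝ W) (h : φ ≠ 0) (v : W) :
    (Projectivization.mk ℝ φ h).rep v = 0 ↔ φ v = 0 := by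
  obtain ⟨c, hc, hrep⟩ := exists_rep_smul φ h
  rw [hrep, LinearMap.smul_apply, smul_eq_mul, mul_eq_zero]
  simp [hc]

lemma ivt_aux (u v : W) (φ g : Module.Dual ℝ W)
    (hind : ∀ a b : ℝ, a • u + b • v = 0 → a = 0 ∧ b = 0)
    (hneg : (φ u * g u) * (φ v * g v) < 0) :
    ∃ t : ℝ, t ∈ Set.Icc (0:ℝ) 1 ∧ ∃ _ : (1-t) • u + t • v ≠ 0,
      (φ ((1-t) • u + t • v) = 0 ∨ g ((1-t) • u + t • v) = 0) := by
  set f : ℝ → ℝ := fun t => ((1-t) * φ u + t * φ v) * ((1-t) * g u + t * g v) with hf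
  have hcont : Continuous f := by fun_prop
  have hf0 : f 0 = φ u * g u := by simp [hf]
  have hf1 : f 1 = φ v * g v := by simp [hf]
  have key : ∃ t ∈ Set.Icc (0:ℝ) 1, f t = 0 := by
    rcases mul_neg_iff.1 hneg with ⟨h1, h2⟩ | ⟨h1, h2⟩
    · have := intermediate_value_Icc' (zero_le_one) hcont.continuousOn
      have h0 : (0:ℝ) ∈ Set.Icc (f 1) (f 0) := by
        rw [hf0, hf1]; exact ⟨le_of_lt h2, le_of_lt h1⟩
      obtain ⟨t, ht, hft⟩ := this h0
      exact ⟨t, ht, hft⟩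
    · have := intermediate_value_Icc (zero_le_one) hcont.continuousOn
      have h0 : (0:ℝ) ∈ Set.Icc (f 0) (f 1) := by
        rw [hf0, hf1]; exact ⟨le_of_lt h1, le_of_lt h2⟩
      obtain ⟨t, ht, hft⟩ := this h0
      exact ⟨t, ht, hft⟩
  obtain ⟨t, ht, hft⟩ := key
  have hw : (1-t) • u + t • v ≠ 0 := by
    intro h0
    obtain ⟨h1, h2⟩ := hind _ _ h0
    rw [h2] at h1; norm_num at h1
  refine ⟨t, ht, hw, ?_⟩
  have hφ : φ ((1-t) • u + t • v) = (1-t) * φ u + t * φ v := by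
    simp [map_add, map_smul]
  have hg : g ((1-t) • u + t • v) = (1-t) * g u + t * g v := by
    simp [map_add, map_smul]
  rw [hφ, hg]
  exact mul_eq_zero.1 hft

lemma sign_const {S : Set (ℙ ℝ W)} (hS : IsProjConvex S)
    (φ g : Module.Dual ℝ W) (hφ : ∀ x ∈ S, φ x.rep ≠ 0) (hg : ∀ x ∈ S, g x.rep ≠ 0)
    {p q : ℙ ℝ W} (hp : p ∈ S) (hq : q ∈ S) :
    0 < (φ p.rep * g p.rep) * (φ q.rep * g q.rep) := by
  rcases eq_or_ne p q with rfl | hpq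
  · have h1 : φ p.rep * g p.rep ≠ 0 := mul_ne_zero (hφ p hp) (hg p hp)
    exact mul_self_pos.2 h1
  rcases lt_or_ge 0 ((φ p.rep * g p.rep) * (φ q.rep * g q.rep)) with h | h
  · exact h
  exfalso
  have hne : (φ p.rep * g p.rep) * (φ q.rep * g q.rep) ≠ 0 :=
    mul_ne_zero (mul_ne_zero (hφ p hp) (hg p hp)) (mul_ne_zero (hφ q hq) (hg q hq))
  have hneg : (φ p.rep * g p.rep) * (φ q.rep * g q.rep) < 0 := lt_of_le_of_ne h hne
  set u := p.rep
  set v := q.rep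
  have hind := ne_imp_indep hpq
  rcases hS p hp q hq hpq with ⟨hsub, -⟩ | ⟨hsub, -⟩
  · obtain ⟨t, ht, hw, hzero⟩ := ivt_aux u v φ g hind hneg
    set x := Projectivization.mk ℝ ((1-t) • u + t • v) hw with hx
    have hxS : x ∈ S := hsub ⟨1 - t, t, hw, by nlinarith [ht.1, ht.2], rfl⟩
    rcases hzero with h0 | h0
    · exact hφ x hxS ((apply_rep_eq_zero_iff φ _ hw).2 h0)
    · exact hg x hxS ((apply_rep_eq_zero_iff g _ hw).2 h0)
  · have hind' : ∀ a b : ℝ, a • u + b • (-v) = 0 → a = 0 ∧ b = 0 := by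
      intro a b hab
      have : a • u + (-b) • v = 0 := by rw [neg_smul, ← smul_neg]; exact hab
      obtain ⟨h1, h2⟩ := hind a (-b) this
      exact ⟨h1, by linarith [neg_eq_zero.1 h2]⟩
    have hneg' : (φ u * g u) * (φ (-v) * g (-v)) < 0 := by
      simpa [map_neg, neg_mul_neg] using hneg
    obtain ⟨t, ht, hw, hzero⟩ := ivt_aux u (-v) φ g hind' hneg'
    have heq : (1-t) • u + t • (-v) = (1-t) • u + (-t) • v := by
      rw [neg_smul, smul_neg]
    rw [heq] at hw hzero
    set x := Projectivization.mk ℝ ((1-t) • u + (-t) • v) hw with hx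
    have hxS : x ∈ S := hsub ⟨1 - t, -t, hw, by nlinarith [ht.1, ht.2], rfl⟩
    rcases hzero with h0 | h0
    · exact hφ x hxS ((apply_rep_eq_zero_iff φ _ hw).2 h0)
    · exact hg x hxS ((apply_rep_eq_zero_iff g _ hw).2 h0)

set_option maxHeartbeats 1000000 in
lemma phiMap_convex {S : Set (ℙ ℝ W)} (hne : S.Nonempty) (hS : IsProjConvex S) :
    IsProjConvex (PhiMap S) := by
  intro ψ hψ χ hχ hpc
  set φ := ψ.rep with hφdef
  set g := χ.rep with hgdef
  have hφ : ∀ x ∈ S, φ x.rep ≠ 0 := hψ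
  have hg : ∀ x ∈ S, g x.rep ≠ 0 := hχ
  obtain ⟨x₀, hx₀⟩ := hne
  have hindD : ∀ a b : ℝ, a • φ + b • g = 0 → a = 0 ∧ b = 0 := ne_imp_indep hpc
  have hsign := fun {x} (hx : x ∈ S) => sign_const hS φ g hφ hg hx₀ hx
  have hbadne : (g x₀.rep) • φ + (-(φ x₀.rep)) • g ≠ 0 := by
    intro h0
    exact hφ x₀ hx₀ (neg_eq_zero.1 (hindD _ _ h0).2)
  have hbadval : ((g x₀.rep) • φ + (-(φ x₀.rep)) • g) x₀.rep = 0 := by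
    simp [smul_eq_mul]; ring
  have hbadnotin :
      Projectivization.mk ℝ ((g x₀.rep) • φ + (-(φ x₀.rep)) • g) hbadne ∉ PhiMap S := by
    intro hmem
    exact hmem x₀ hx₀ ((rep_apply_eq_zero_iff _ hbadne x₀.rep).2 hbadval)
  rcases lt_or_ge 0 (φ x₀.rep * g x₀.rep) with hpos | hle
  · have hall : ∀ x ∈ S, 0 < φ x.rep * g x.rep := by
      intro x hx
      have := hsign hx
      nlinarith
    left
    constructor
    · rintro y ⟨a, b, hy, hab, rfl⟩
      intro x hx
      rw [Ne, rep_apply_eq_zero_iff _ hy x.rep]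
      intro h0
      have h0' : a * φ x.rep + b * g x.rep = 0 := by simpa [smul_eq_mul] using h0
      have h1 : a * b * (φ x.rep * g x.rep) = -((b * g x.rep)^2) := by
        linear_combination (b * g x.rep) * h0'
      have h2 : 0 ≤ a * b * (φ x.rep * g x.rep) := mul_nonneg hab (le_of_lt (hall x hx))
      have hb : b * g x.rep = 0 := by nlinarith [sq_nonneg (b * g x.rep)]
      have hb0 : b = 0 := by
        rcases mul_eq_zero.1 hb with h | h
        · exact h
        · exact absurd h (hg x hx)
      have ha0 : a = 0 := by
        rcases (show a = 0 ∨ φ x.rep = 0 by simpa [hb0] using h0') with h | h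
        · exact h
        · exact absurd h (hφ x hx)
      apply hy
      rw [ha0, hb0, zero_smul, zero_smul, add_zero]
    · intro hsub
      exact hbadnotin (hsub ⟨g x₀.rep, -(φ x₀.rep), hbadne, by nlinarith [hall x₀ hx₀], rfl⟩)
  · have hne0 : φ x₀.rep * g x₀.rep ≠ 0 := mul_ne_zero (hφ x₀ hx₀) (hg x₀ hx₀)
    have hneg0 : φ x₀.rep * g x₀.rep < 0 := lt_of_le_of_ne hle hne0
    have hall : ∀ x ∈ S, φ x.rep * g x.rep < 0 := by
      intro x hx
      have := hsign hx
      nlinarith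
    right
    constructor
    · rintro y ⟨a, b, hy, hab, rfl⟩
      intro x hx
      rw [Ne, rep_apply_eq_zero_iff _ hy x.rep]
      intro h0
      have h0' : a * φ x.rep + b * g x.rep = 0 := by simpa [smul_eq_mul] using h0
      have h1 : a * b * (φ x.rep * g x.rep) = -((b * g x.rep)^2) := by
        linear_combination (b * g x.rep) * h0'
      have h2 : 0 ≤ a * b * (φ x.rep * g x.rep) :=
        by nlinarith [hall x hx]
      have hb : b * g x.rep = 0 := by nlinarith [sq_nonneg (b * g x.rep)]
      have hb0 : b = 0 := by
        rcases mul_eq_zero.1 hb with h | h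
        · exact h
        · exact absurd h (hg x hx)
      have ha0 : a = 0 := by
        rcases (show a = 0 ∨ φ x.rep = 0 by simpa [hb0] using h0') with h | h
        · exact h
        · exact absurd h (hφ x hx)
      apply hy
      rw [ha0, hb0, zero_smul, zero_smul, add_zero]
    · intro hsub
      exact hbadnotin (hsub ⟨g x₀.rep, -(φ x₀.rep), hbadne, by nlinarith, rfl⟩)

end Aux

section Top

variable {V : Type*} [NormedAddCommGroup V] [NormedSpace ℝ V] [FiniteDimensional ℝ V]

lemma qmap_isQuotientMap (W : Type*) [NormedAddCommGroup W] [NormedSpace ℝ W] :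
    Topology.IsQuotientMap (fun w : {v : W // v ≠ 0} => Projectivization.mk ℝ w.1 w.2) :=
  isQuotientMap_quotient_mk'

lemma eval_continuous (u : V) : Continuous fun φ : Module.Dual ℝ V => φ u := by
  have : (fun φ : Module.Dual ℝ V => φ u)
      = fun φ : Module.Dual ℝ V => (LinearMap.applyₗ u : (Module.Dual ℝ V) →ₗ[ℝ] ℝ) φ := rfl
  rw [this]
  exact LinearMap.continuous_of_finiteDimensional _

lemma eval_norm_le (ψ : Module.Dual ℝ V) (v : V) : |ψ v| ≤ ‖ψ‖ * ‖v‖ := by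
  calc |ψ v| = ‖(LinearMap.toContinuousLinearMap ψ) v‖ := by
        rw [LinearMap.coe_toContinuousLinearMap']; exact (Real.norm_eq_abs _).symm
    _ ≤ ‖LinearMap.toContinuousLinearMap ψ‖ * ‖v‖ :=
        (LinearMap.toContinuousLinearMap ψ).le_opNorm v
    _ = ‖ψ‖ * ‖v‖ := rfl

/-- If `S` is closed, `Φ(S)` is open. -/
lemma phiMap_isOpen {S : Set (ℙ ℝ V)} (hS : IsClosed S) : IsOpen (PhiMap S) := by
  have hqm := qmap_isQuotientMap V
  have hqm' := qmap_isQuotientMap (Module.Dual ℝ V)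
  rw [← hqm'.isOpen_preimage]
  -- a compact set of unit representatives of S
  have hSpre : IsClosed ((fun w : {v : V // v ≠ 0} => Projectivization.mk ℝ w.1 w.2) ⁻¹' S) :=
    hS.preimage hqm.continuous
  obtain ⟨F, hFclosed, hFeq⟩ := isClosed_induced_iff.1 hSpre
  set K : Set V := Metric.sphere (0:V) 1 ∩ F with hK
  have hKcomp : IsCompact K := (isCompact_sphere 0 1).inter_right hFclosed
  have hKne0 : ∀ v ∈ K, v ≠ 0 := by
    intro v hv
    have h1 : ‖v‖ = 1 := by simpa using hv.1
    intro h0; rw [h0] at h1; simp at h1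
  have hFiff : ∀ w : {v : V // v ≠ 0}, w.1 ∈ F ↔ Projectivization.mk ℝ w.1 w.2 ∈ S :=
    fun w => Set.ext_iff.1 hFeq w
  have hpre : ((fun w : {φ : Module.Dual ℝ V // φ ≠ 0} =>
        Projectivization.mk ℝ w.1 w.2) ⁻¹' PhiMap S)
      = Subtype.val ⁻¹' {φ : Module.Dual ℝ V | ∀ v ∈ K, φ v ≠ 0} := by
    ext w
    simp only [Set.mem_preimage, Set.mem_setOf_eq]
    constructor
    · intro hmem v hvK
      have hv1 : ‖v‖ = 1 := by simpa using hvK.1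
      have hvne : v ≠ 0 := hKne0 v hvK
      have hxS : Projectivization.mk ℝ v hvne ∈ S := (hFiff ⟨v, hvne⟩).1 hvK.2
      intro h0
      exact hmem _ hxS ((rep_apply_eq_zero_iff w.1 w.2 _).2
        ((apply_rep_eq_zero_iff w.1 v hvne).2 h0))
    · intro hmem x hxS
      set v : V := ‖x.rep‖⁻¹ • x.rep with hv
      have hrepne : ‖x.rep‖ ≠ 0 := norm_ne_zero_iff.2 x.rep_nonzero
      have hv1 : ‖v‖ = 1 := by
        rw [hv, norm_smul, norm_inv, norm_norm, inv_mul_cancel₀ hrepne]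
      have hvne : v ≠ 0 := by
        intro h0; rw [h0] at hv1; simp at hv1
      have hmkv : Projectivization.mk ℝ v hvne = x := by
        have := (mk_eq_mk_iff' ℝ v x.rep hvne x.rep_nonzero).2 ⟨‖x.rep‖⁻¹, rfl⟩
        rw [this, x.mk_rep]
      have hvK : v ∈ K := by
        refine ⟨by simpa using hv1, ?_⟩
        exact (hFiff ⟨v, hvne⟩).2 (by rw [hmkv]; exact hxS)
      have hφv : w.1 v ≠ 0 := hmem v hvK
      rw [Ne, rep_apply_eq_zero_iff w.1 w.2 x.rep]
      intro h0
      apply hφv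
      rw [hv, map_smul, smul_eq_mul, h0, mul_zero]
  rw [hpre]
  apply IsOpen.preimage continuous_subtype_val
  rw [Metric.isOpen_iff]
  intro φ₀ hφ₀
  rcases K.eq_empty_or_nonempty with hKe | hKne
  · exact ⟨1, one_pos, fun φ _ v hv => by rw [hKe] at hv; exact absurd hv (Set.notMem_empty v)⟩
  · have hcont : Continuous fun v : V => |φ₀ v| :=
      (LinearMap.continuous_of_finiteDimensional φ₀).abs
    obtain ⟨v₀, hv₀K, hmin⟩ := hKcomp.exists_isMinOn hKne hcont.continuousOn
    have hδ : 0 < |φ₀ v₀| := abs_pos.2 (hφ₀ v₀ hv₀K)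
    refine ⟨|φ₀ v₀|, hδ, ?_⟩
    intro φ hball v hvK
    have hv1 : ‖v‖ = 1 := by simpa using hvK.1
    have h1 : |φ₀ v₀| ≤ |φ₀ v| := hmin hvK
    have h2 : |φ₀ v - φ v| ≤ ‖φ₀ - φ‖ := by
      have := eval_norm_le (φ₀ - φ) v
      rwa [LinearMap.sub_apply, hv1, mul_one] at this
    have h3 : ‖φ₀ - φ‖ < |φ₀ v₀| := by
      rw [Metric.mem_ball, dist_eq_norm] at hball
      rwa [norm_sub_rev]
    intro h0
    rw [h0, sub_zero] at h2
    linarith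

/-- If `S` is open, `Φ(S)` is closed. -/
lemma phiMap_isClosed {S : Set (ℙ ℝ V)} (hS : IsOpen S) : IsClosed (PhiMap S) := by
  have hqm := qmap_isQuotientMap V
  have hqm' := qmap_isQuotientMap (Module.Dual ℝ V)
  rw [← isOpen_compl_iff, ← hqm'.isOpen_preimage]
  have hSpre : IsOpen ((fun w : {v : V // v ≠ 0} => Projectivization.mk ℝ w.1 w.2) ⁻¹' S) :=
    hS.preimage hqm.continuous
  obtain ⟨O, hOopen, hOeq⟩ := isOpen_induced_iff.1 hSpre
  set O' : Set V := O ∩ {v | v ≠ 0} with hO'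
  have hO'open : IsOpen O' := hOopen.inter isOpen_ne
  have hOiff : ∀ w : {v : V // v ≠ 0}, w.1 ∈ O ↔ Projectivization.mk ℝ w.1 w.2 ∈ S :=
    fun w => Set.ext_iff.1 hOeq w
  set C : Set (Module.Dual ℝ V) := {φ | φ ≠ 0 ∧ ∃ x ∈ S, φ x.rep = 0} with hC
  have hpre : ((fun w : {φ : Module.Dual ℝ V // φ ≠ 0} =>
        Projectivization.mk ℝ w.1 w.2) ⁻¹' (PhiMap S)ᶜ)
      = Subtype.val ⁻¹' C := by
    ext w
    simp only [Set.mem_preimage, Set.mem_compl_iff, Set.mem_setOf_eq, hC]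
    have hiff : (Projectivization.mk ℝ w.1 w.2 ∈ PhiMap S) ↔ ∀ x ∈ S, w.1 x.rep ≠ 0 := by
      constructor
      · intro hmem x hx h0
        exact hmem x hx ((rep_apply_eq_zero_iff w.1 w.2 x.rep).2 h0)
      · intro hmem x hx h0
        exact hmem x hx ((rep_apply_eq_zero_iff w.1 w.2 x.rep).1 h0)
    rw [hiff]
    push_neg
    constructor
    · intro h; exact ⟨w.2, h⟩
    · intro h; exact h.2
  rw [hpre]
  apply IsOpen.preimage continuous_subtype_val
  rw [isOpen_iff_mem_nhds]
  rintro φ₀ ⟨hφ₀ne, x₁, hx₁S, hx₁0⟩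
  obtain ⟨w₀, hw₀⟩ : ∃ w₀, φ₀ w₀ ≠ 0 := by
    by_contra hcon
    push_neg at hcon
    exact hφ₀ne (LinearMap.ext fun w => by simp [hcon w])
  set F : Module.Dual ℝ V → V := fun φ => x₁.rep - (φ x₁.rep / φ w₀) • w₀ with hF
  have hFcont : ContinuousAt F φ₀ := by
    apply ContinuousAt.sub continuousAt_const
    exact (((eval_continuous x₁.rep).continuousAt.div
      (eval_continuous w₀).continuousAt hw₀).smul continuousAt_const)
  have hF0 : F φ₀ = x₁.rep := by
    rw [hF]; simp [hx₁0]
  have hx₁O' : x₁.rep ∈ O' := by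
    refine ⟨?_, x₁.rep_nonzero⟩
    exact (hOiff ⟨x₁.rep, x₁.rep_nonzero⟩).2 (by rw [x₁.mk_rep]; exact hx₁S)
  have E1 : ∀ᶠ φ in nhds φ₀, F φ ∈ O' := by
    apply hFcont
    rw [hF0]
    exact hO'open.mem_nhds hx₁O'
  have E2 : ∀ᶠ φ in nhds φ₀, φ w₀ ≠ 0 :=
    (eval_continuous w₀).continuousAt.eventually_ne hw₀
  filter_upwards [E1, E2] with φ h1 h2
  refine ⟨fun h0 => h2 (by rw [h0]; simp), ?_⟩
  have hFne : F φ ≠ 0 := h1.2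
  refine ⟨Projectivization.mk ℝ (F φ) hFne, (hOiff ⟨F φ, hFne⟩).1 h1.1, ?_⟩
  rw [apply_rep_eq_zero_iff φ (F φ) hFne]
  rw [hF]
  simp only [map_sub, map_smul, smul_eq_mul]
  field_simp
  ring

end Top

/-- For a nonempty subset `S` of a real projective space: if `S` is projective convex then so is
`Φ(S)`; if moreover `S` is open then `Φ(S)` is closed, and if `S` is closed then `Φ(S)` is
open. -/
theorem phiMap_convex_open_closed
    {V : Type*} [NormedAddCommGroup V] [NormedSpace ℝ V] [FiniteDimensional ℝ V]
    (S : Set (ℙ ℝ V)) (hne : S.Nonempty) :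
    (IsProjConvex S → IsProjConvex (PhiMap S)) ∧
    (IsOpen S → IsProjConvex S → IsClosed (PhiMap S) ∧ IsProjConvex (PhiMap S)) ∧
    (IsClosed S → IsProjConvex S → IsOpen (PhiMap S) ∧ IsProjConvex (PhiMap S)) := by
  exact ⟨fun h => phiMap_convex hne h,
    fun ho hc => ⟨phiMap_isClosed ho, phiMap_convex hne hc⟩,
    fun hcl hc => ⟨phiMap_isOpen hcl, phiMap_convex hne hc⟩⟩
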